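/- Let Gab(g, κ) = {(P(g_1), …, P(g_n)) : P a q-polynomial of q-degree < κ} ⊆ F_{q^m}^n where g_1, …, g_n ∈ F_{q^m} are F_q-linearly independent and κ ≤ n ≤ m. Then Gab(g, κ) is an F_{q^m}-linear subspace of F_{q^m}^n of F_{q^m}-dimension κ. -/

import Mathlib

open Polynomial

/-- With `q = #F_q`, `m = [L : F_q]`, `g₁,…,g_n ∈ L = F_{q^m}`
`F_q`-linearly independent, and `κ ≤ n ≤ m`, the Gabidulin code
`Gab(g,κ) = {(P(g₁),…,P(g_n)) : P a q-polynomial of q-degree < κ}` is an `L`-linear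
subspace of `L^n` of `L`-dimension `κ`. -/
theorem stmt_4 {K L : Type*} [Field K] [Fintype K] [Field L] [Algebra K L]
    (q m n κ : ℕ) (hq : q = Fintype.card K) (hm : m = Module.finrank K L)
    (hκn : κ ≤ n) (hnm : n ≤ m)
    (g : Fin n → L) (hg : LinearIndependent K g) :
    ∃ W : Submodule L (Fin n → L),
      (W : Set (Fin n → L)) =
        {c | ∃ p : Fin κ → L, c = fun j => ∑ i : Fin κ, p i * g j ^ q ^ (i : ℕ)} ∧
      Module.finrank L W = κ := by
  classical
  have hq2 : 1 < q := hq ▸ Fintype.one_lt_card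
  have hq0 : 0 < q := by omega
  -- characteristic setup
  set p := ringChar K with hpdef
  haveI hpfact : Fact p.Prime := ⟨CharP.char_is_prime K p⟩
  haveI : CharP L p := charP_of_injective_algebraMap (algebraMap K L).injective p
  obtain ⟨d, hd⟩ := FiniteField.card K p
  have hqpd : q = p ^ (d : ℕ) := by rw [hq, hd.2]
  -- the linear map
  let φ : (Fin κ → L) →ₗ[L] (Fin n → L) :=
    { toFun := fun c j => ∑ i : Fin κ, c i * g j ^ q ^ (i : ℕ)
      map_add' := by
        intro a b; funext j
        simp [add_mul, Finset.sum_add_distrib]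
      map_smul' := by
        intro a b; funext j
        simp [Finset.mul_sum, mul_assoc] }
  refine ⟨LinearMap.range φ, ?_, ?_⟩
  · ext c
    simp only [LinearMap.mem_range, Set.mem_setOf_eq]
    constructor
    · rintro ⟨c', rfl⟩; exact ⟨c', rfl⟩
    · rintro ⟨c', rfl⟩; exact ⟨c', rfl⟩
  · -- injectivity of φ
    have hinj : Function.Injective φ := by
      rw [← LinearMap.ker_eq_bot, LinearMap.ker_eq_bot']
      intro c hc
      have hc' : ∀ j, ∑ i : Fin κ, c i * g j ^ q ^ (i : ℕ) = 0 := fun j =>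
        congrFun hc j
      -- the associated polynomial
      set f : L[X] := ∑ i : Fin κ, C (c i) * X ^ (q ^ (i : ℕ)) with hf
      have heval : ∀ x : L, f.eval x = ∑ i : Fin κ, c i * x ^ q ^ (i : ℕ) := by
        intro x; simp [hf, Polynomial.eval_finset_sum]
      -- evaluation is additive & K-semilinear in the relevant sense
      have hfrob : ∀ (x y : L) (e : ℕ), (x + y) ^ q ^ e = x ^ q ^ e + y ^ q ^ e := by
        intro x y e
        rw [hqpd, ← pow_mul, add_pow_char_pow, pow_mul]
      have hsmul : ∀ (a : K) (x : L) (e : ℕ),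
          (a • x) ^ q ^ e = a • x ^ q ^ e := by
        intro a x e
        rw [Algebra.smul_def, Algebra.smul_def, mul_pow, ← map_pow,
          hq, FiniteField.pow_card_pow]
      -- every element of the span is a root of f
      have hroot : ∀ x ∈ Submodule.span K (Set.range g), f.eval x = 0 := by
        intro x hx
        induction hx using Submodule.span_induction with
        | mem x hx =>
          obtain ⟨j, rfl⟩ := hx
          rw [heval]; exact hc' j
        | zero =>
          rw [heval]
          refine Finset.sum_eq_zero fun i _ => ?_
          rw [zero_pow (pow_ne_zero _ (by omega)), mul_zero]
        | add x y _ _ hx hy =>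
          rw [heval] at hx hy ⊢
          simp only [hfrob, mul_add, Finset.sum_add_distrib, hx, hy, add_zero]
        | smul a x _ hx =>
          rw [heval] at hx ⊢
          calc ∑ i : Fin κ, c i * (a • x) ^ q ^ (i : ℕ)
              = a • ∑ i : Fin κ, c i * x ^ q ^ (i : ℕ) := by
                rw [Finset.smul_sum]
                refine Finset.sum_congr rfl fun i _ => ?_
                rw [hsmul, Algebra.smul_def, Algebra.smul_def]; ring
            _ = 0 := by rw [hx, smul_zero]
      -- the span is big: q^n elements
      set S := Submodule.span K (Set.range g) with hS
      haveI : Module.Finite K S := by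
        apply Module.Finite.span_of_finite
        exact Set.finite_range g
      haveI : Finite S := Module.finite_of_finite K
      haveI : Fintype S := Fintype.ofFinite S
      have hcardS : Fintype.card S = q ^ n := by
        rw [hq, Module.card_eq_pow_finrank (K := K) (V := S)]
        congr 1
        rw [hS, finrank_span_eq_card hg, Fintype.card_fin]
      -- degree bound
      have hdeg : f.natDegree < q ^ n := by
        have h1 : f.natDegree ≤ q ^ n - 1 := by
          refine Polynomial.natDegree_sum_le_of_forall_le _ _ fun i _ => ?_
          refine le_trans (Polynomial.natDegree_C_mul_le _ _) ?_
          rw [Polynomial.natDegree_X_pow]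
          have : q ^ (i : ℕ) < q ^ n :=
            Nat.pow_lt_pow_right hq2 (lt_of_lt_of_le i.2 hκn)
          omega
        have : 0 < q ^ n := pow_pos hq0 n
        omega
      -- f = 0
      have hf0 : f = 0 := by
        refine Polynomial.eq_zero_of_natDegree_lt_card_of_eval_eq_zero f
          (f := fun s : S => (s : L)) Subtype.val_injective
          (fun s => hroot s s.2) ?_
        rwa [hcardS]
      -- extract coefficients
      funext i
      have : f.coeff (q ^ (i : ℕ)) = c i := by
        rw [hf, Polynomial.finset_sum_coeff]
        rw [Finset.sum_eq_single i]
        · simp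
        · intro j _ hji
          rw [Polynomial.coeff_C_mul, Polynomial.coeff_X_pow, if_neg, mul_zero]
          exact fun h => hji (Fin.ext (Nat.pow_right_injective hq2 h)).symm
        · simp
      rw [hf0] at this
      simpa using this.symm
    rw [LinearMap.finrank_range_of_inj hinj]
    simp
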